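/- Let f_j(t), j ∈ ℤ, be holomorphic functions on the disc {|t| ≤ η} satisfying: (a) there exist C, ε > 0 with sup_{|t|≤η}|f_j(t)| ≤ C ε^{-j}(-j)! for all j < 0, and (b) there exist M, R > 0 with |f_j(t)| ≤ M (R^j/j!)|t|^j for |t| ≤ η and all j ≥ 0. Similarly for g_j with the same type of bounds. Then for each k < 0 the series h_k(t) = ∑_{i+j=k} f_i(t) g_j(t) converges uniformly on {|t| ≤ η̃} with η̃ = min(η, 1/(2Rε)), and there exist C', ε' > 0 with sup_{|t|≤η̃}|h_k(t)| ≤ C' (ε')^{-k}(-k)! for all k < 0. -/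

import Mathlib

open Nat Metric Filter

private lemma key_nat (a m : ℕ) : (a + m)! * 2 ^ a ≤ a ! * m ! * 3 ^ (a + m) := by
  have h1 : (a + m).choose m * m ! * a ! = (a + m)! := by
    have := Nat.choose_mul_factorial_mul_factorial (show m ≤ a + m by omega)
    simpa using this
  have hsymm : (a + m).choose m = (a + m).choose a := by
    simpa using Nat.choose_symm (show a ≤ a + m by omega)
  have h2 : 2 ^ a * (a + m).choose m ≤ 3 ^ (a + m) := by
    have hexp : (3:ℕ) ^ (a+m) = (2+1:ℕ) ^ (a+m) := by norm_num
    rw [hexp, add_pow]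
    have hmem : a ∈ Finset.range (a + m + 1) := by simp
    calc 2 ^ a * (a + m).choose m = 2 ^ a * 1 ^ (a + m - a) * (a + m).choose a := by
          rw [hsymm]; ring
      _ ≤ ∑ j ∈ Finset.range (a + m + 1), 2 ^ j * 1 ^ (a + m - j) * (a + m).choose j :=
          Finset.single_le_sum (f := fun j => 2 ^ j * 1 ^ (a + m - j) * (a + m).choose j)
            (fun i _ => Nat.zero_le _) hmem
  calc (a + m)! * 2 ^ a = (2 ^ a * (a + m).choose m) * (m ! * a !) := by
        rw [← h1]; ring
    _ ≤ 3 ^ (a + m) * (m ! * a !) := Nat.mul_le_mul_right _ h2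
    _ = a ! * m ! * 3 ^ (a + m) := by ring

private lemma key_real (a m : ℕ) :
    ((a + m)! : ℝ) * 2 ^ a ≤ (a ! : ℝ) * m ! * 3 ^ (a + m) := by
  exact_mod_cast key_nat a m

private lemma prod_bound (M C ε R x : ℝ) (a m : ℕ) (hM : 0 < M) (hC : 0 < C) (hε : 0 < ε)
    (hx : 0 ≤ x) (hR : 0 ≤ R) (hRx : R * x ≤ 1 / (2 * ε)) :
    (M * R ^ a / a ! * x ^ a) * (C * ε ^ (a + m) * ((a + m)! : ℝ)) ≤
      (M * C + C ^ 2) * (ε ^ m * (m ! : ℝ) * 3 ^ m) * (3 / 4) ^ a := by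
  have hfa : (0:ℝ) < (a ! : ℝ) := by exact_mod_cast Nat.factorial_pos a
  have h1 : (R * x) ^ a ≤ (1 / (2 * ε)) ^ a :=
    pow_le_pow_left₀ (by positivity) hRx a
  have h34 : ((3:ℝ)/4)^a = 3^a / (2^a * 2^a) := by rw [div_pow, ← mul_pow]; norm_num
  calc (M * R ^ a / a ! * x ^ a) * (C * ε ^ (a + m) * ((a + m)! : ℝ))
      = (M * C / a ! * (ε ^ (a + m) * ((a + m)! : ℝ))) * (R * x) ^ a := by
        rw [mul_pow]; ring
    _ ≤ (M * C / a ! * (ε ^ (a + m) * ((a + m)! : ℝ))) * (1 / (2 * ε)) ^ a := by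
        gcongr
    _ = (M * C / a !) * ((a + m)! : ℝ) * ((1 / 2) ^ a * ε ^ m) := by
        rw [pow_add]
        field_simp
        ring_nf
        rw [← mul_pow, mul_inv_cancel₀ hε.ne', one_pow, one_mul]
    _ ≤ (M * C / a !) * ((a ! : ℝ) * m ! * 3 ^ (a + m) / 2 ^ a) * ((1 / 2) ^ a * ε ^ m) := by
        have h2 : ((a + m)! : ℝ) ≤ (a ! : ℝ) * m ! * 3 ^ (a + m) / 2 ^ a := by
          rw [le_div_iff₀ (by positivity)]
          exact key_real a m
        gcongr
    _ = (M * C) * (ε ^ m * (m ! : ℝ) * 3 ^ m) * (3 / 4) ^ a := by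
        rw [pow_add, h34]
        field_simp
        ring_nf
        rw [← mul_pow]; norm_num
    _ ≤ (M * C + C ^ 2) * (ε ^ m * (m ! : ℝ) * 3 ^ m) * (3 / 4) ^ a := by
        gcongr
        nlinarith

theorem stmt_8 (f g : ℤ → ℂ → ℂ) (η C ε M R : ℝ)
    (hη : 0 < η) (hC : 0 < C) (hε : 0 < ε) (hM : 0 < M) (hR : 0 < R)
    (hf : ∀ j : ℤ, DifferentiableOn ℂ (f j) (closedBall 0 η))
    (hg : ∀ j : ℤ, DifferentiableOn ℂ (g j) (closedBall 0 η))
    (hfneg : ∀ j : ℤ, j < 0 → ∀ t ∈ closedBall (0 : ℂ) η,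
      ‖f j t‖ ≤ C * ε ^ (-j) * ((-j).toNat !))
    (hgneg : ∀ j : ℤ, j < 0 → ∀ t ∈ closedBall (0 : ℂ) η,
      ‖g j t‖ ≤ C * ε ^ (-j) * ((-j).toNat !))
    (hfpos : ∀ j : ℤ, 0 ≤ j → ∀ t ∈ closedBall (0 : ℂ) η,
      ‖f j t‖ ≤ M * R ^ j.toNat / (j.toNat !) * ‖t‖ ^ j.toNat)
    (hgpos : ∀ j : ℤ, 0 ≤ j → ∀ t ∈ closedBall (0 : ℂ) η,
      ‖g j t‖ ≤ M * R ^ j.toNat / (j.toNat !) * ‖t‖ ^ j.toNat) :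
    ∃ h : ℤ → ℂ → ℂ,
      (∀ k : ℤ, k < 0 →
        TendstoUniformlyOn
          (fun (s : Finset ℤ) (t : ℂ) => ∑ i ∈ s, f i t * g (k - i) t)
          (h k) atTop (closedBall 0 (min η (1 / (2 * R * ε))))) ∧
      ∃ C' > (0 : ℝ), ∃ ε' > (0 : ℝ), ∀ k : ℤ, k < 0 →
        ∀ t ∈ closedBall (0 : ℂ) (min η (1 / (2 * R * ε))),
          ‖h k t‖ ≤ C' * ε' ^ (-k) * ((-k).toNat !) := by
  classical
  set η' : ℝ := min η (1 / (2 * R * ε)) with hη'def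
  have hsub : closedBall (0:ℂ) η' ⊆ closedBall 0 η :=
    closedBall_subset_closedBall (min_le_left _ _)
  -- pointwise bound
  have bound : ∀ k : ℤ, k < 0 → ∀ i : ℤ, ∀ t ∈ closedBall (0:ℂ) η',
      ‖f i t * g (k - i) t‖ ≤
        ((M * C + C ^ 2) * (ε ^ (-k).toNat * (((-k).toNat !) : ℝ) * 3 ^ (-k).toNat)) *
          (3/4 : ℝ) ^ (i.toNat + (k - i).toNat) := by
    intro k hk i t ht
    have ht' : t ∈ closedBall (0:ℂ) η := hsub ht
    have hx : ‖t‖ ≤ η' := by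
      simpa using mem_closedBall_zero_iff.mp ht
    have hx0 : 0 ≤ ‖t‖ := norm_nonneg t
    have hRx : R * ‖t‖ ≤ 1 / (2 * ε) := by
      have h2 : ‖t‖ ≤ 1 / (2 * R * ε) := le_trans hx (min_le_right _ _)
      calc R * ‖t‖ ≤ R * (1 / (2 * R * ε)) := by gcongr
        _ = 1 / (2 * ε) := by field_simp
    have habs : ‖f i t * g (k - i) t‖ = ‖f i t‖ * ‖g (k - i) t‖ := by
      simp
    rw [habs]
    set m : ℕ := (-k).toNat with hm
    rcases le_or_gt 0 i with h0 | h0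
    · -- i ≥ 0, k - i < 0
      set a : ℕ := i.toNat with ha
      have e1 : (-(k - i)).toNat = a + m := by omega
      have e2 : ε ^ (-(k - i)) = ε ^ (a + m) := by
        rw [show -(k - i) = ((a + m : ℕ) : ℤ) by push_cast; omega, zpow_natCast]
      have hfb := hfpos i h0 t ht'
      have hgb := hgneg (k - i) (by omega) t ht'
      rw [e1, e2] at hgb
      have e3 : i.toNat + (k - i).toNat = a := by omega
      rw [e3]
      calc ‖f i t‖ * ‖g (k - i) t‖
          ≤ (M * R ^ a / a ! * ‖t‖ ^ a) * (C * ε ^ (a + m) * ((a + m)! : ℝ)) := by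
            apply mul_le_mul hfb hgb (norm_nonneg _) ?_
            positivity
        _ ≤ (M * C + C ^ 2) * (ε ^ m * (m ! : ℝ) * 3 ^ m) * (3 / 4) ^ a :=
            prod_bound M C ε R _ a m hM hC hε hx0 hR.le hRx
        _ = ((M * C + C ^ 2) * (ε ^ m * ((m !) : ℝ) * 3 ^ m)) * (3/4 : ℝ) ^ a := by ring
    · rcases le_or_gt i k with h1 | h1
      · -- i ≤ k < 0, k - i ≥ 0
        set a : ℕ := (k - i).toNat with ha
        have e1 : (-i).toNat = a + m := by omega
        have e2 : ε ^ (-i) = ε ^ (a + m) := by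
          rw [show -i = ((a + m : ℕ) : ℤ) by push_cast; omega, zpow_natCast]
        have hfb := hfneg i (by omega) t ht'
        rw [e1, e2] at hfb
        have hgb := hgpos (k - i) (by omega) t ht'
        have e3 : i.toNat + (k - i).toNat = a := by omega
        rw [e3]
        calc ‖f i t‖ * ‖g (k - i) t‖
            ≤ (C * ε ^ (a + m) * ((a + m)! : ℝ)) * (M * R ^ a / a ! * ‖t‖ ^ a) := by
              apply mul_le_mul hfb hgb (norm_nonneg _) ?_
              positivity
          _ = (M * R ^ a / a ! * ‖t‖ ^ a) * (C * ε ^ (a + m) * ((a + m)! : ℝ)) := by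
              ring
          _ ≤ (M * C + C ^ 2) * (ε ^ m * (m ! : ℝ) * 3 ^ m) * (3 / 4) ^ a :=
              prod_bound M C ε R _ a m hM hC hε hx0 hR.le hRx
          _ = ((M * C + C ^ 2) * (ε ^ m * ((m !) : ℝ) * 3 ^ m)) * (3/4 : ℝ) ^ a := by ring
      · -- k < i < 0
        set b : ℕ := (-i).toNat with hb
        set c : ℕ := (i - k).toNat with hc
        have hbc : b + c = m := by omega
        have e2 : ε ^ (-i) = ε ^ b := by
          rw [show -i = ((b : ℕ) : ℤ) by omega, zpow_natCast]
        have e2' : ε ^ (-(k - i)) = ε ^ c := by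
          rw [show -(k - i) = ((c : ℕ) : ℤ) by omega, zpow_natCast]
        have e5 : (-(k - i)).toNat = c := by omega
        have hfb := hfneg i h0 t ht'
        have hgb := hgneg (k - i) (by omega) t ht'
        rw [e2] at hfb
        rw [e2', e5] at hgb
        have e3 : i.toNat + (k - i).toNat = 0 := by omega
        rw [e3, pow_zero, mul_one]
        have hfac : (b ! : ℝ) * (c !) ≤ (m ! : ℝ) := by
          have hn : b ! * c ! ≤ m ! := by
            rw [← hbc]
            exact Nat.le_of_dvd (Nat.factorial_pos _)
              (Nat.factorial_mul_factorial_dvd_factorial_add b c)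
          exact_mod_cast hn
        calc ‖f i t‖ * ‖g (k - i) t‖
            ≤ (C * ε ^ b * (b ! : ℝ)) * (C * ε ^ c * (c ! : ℝ)) := by
              apply mul_le_mul hfb hgb (norm_nonneg _) ?_
              positivity
          _ = C ^ 2 * ε ^ (b + c) * ((b ! : ℝ) * (c !)) := by rw [pow_add]; ring
          _ ≤ C ^ 2 * ε ^ m * (m ! : ℝ) := by rw [hbc]; gcongr
          _ = C ^ 2 * (ε ^ m * (m ! : ℝ)) * 1 := by ring
          _ ≤ (M * C + C ^ 2) * (ε ^ m * (m ! : ℝ)) * 3 ^ m := by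
              gcongr
              · nlinarith
              · exact one_le_pow₀ (by norm_num)
          _ = ((M * C + C ^ 2) * (ε ^ m * ((m !) : ℝ) * 3 ^ m)) := by ring
  -- summability and sum bound
  have main : ∀ k : ℤ, k < 0 → ∃ S : ℝ,
      HasSum (fun i : ℤ =>
        ((M * C + C ^ 2) * (ε ^ (-k).toNat * (((-k).toNat !) : ℝ) * 3 ^ (-k).toNat)) *
          (3/4 : ℝ) ^ (i.toNat + (k - i).toNat)) S ∧
      S ≤ 8 * (M * C + C ^ 2) * (4 * ε) ^ (-k).toNat * (((-k).toNat !) : ℝ) := by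
    intro k hk
    set m : ℕ := (-k).toNat with hm
    set KKk : ℝ := (M * C + C ^ 2) * (ε ^ m * ((m !) : ℝ) * 3 ^ m) with hKKk
    have hKKpos : 0 < KKk := by rw [hKKk]; positivity
    set w : ℤ → ℝ := fun i => KKk * (3/4 : ℝ) ^ (i.toNat + (k - i).toNat) with hw
    -- positive part
    have hA : HasSum (fun n : ℕ => w (n : ℤ)) (KKk * (1 - 3/4 : ℝ)⁻¹) := by
      have hfe : (fun n : ℕ => w (n : ℤ)) = fun n : ℕ => KKk * (3/4 : ℝ) ^ n := by
        funext n
        have hne : ((n : ℤ)).toNat + (k - (n : ℤ)).toNat = n := by omega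
        simp only [hw, hne]
      rw [hfe]
      exact (hasSum_geometric_of_lt_one (by norm_num) (by norm_num)).mul_left KKk
    -- negative part
    have hqb : ∀ n : ℕ, w (-(n + 1)) ≤ KKk * ((4/3 : ℝ) ^ m * (3/4 : ℝ) ^ n) := by
      intro n
      have hem : n ≤ ((-((n:ℤ) + 1)).toNat + (k - -((n:ℤ) + 1)).toNat) + m := by omega
      simp only [hw]
      generalize hE : ((-((n:ℤ) + 1)).toNat + (k - -((n:ℤ) + 1)).toNat) = e at hem ⊢
      have h1 : (3/4 : ℝ) ^ (e + m) ≤ (3/4 : ℝ) ^ n :=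
        pow_le_pow_of_le_one (by norm_num) (by norm_num) hem
      have h2 : (3/4 : ℝ) ^ (e + m) * (4/3 : ℝ) ^ m = (3/4 : ℝ) ^ e := by
        rw [pow_add, mul_assoc, ← mul_pow]
        norm_num
      have key : (3/4 : ℝ) ^ e ≤ (4/3 : ℝ) ^ m * (3/4 : ℝ) ^ n := by
        rw [← h2]
        calc (3/4 : ℝ) ^ (e + m) * (4/3 : ℝ) ^ m ≤ (3/4 : ℝ) ^ n * (4/3 : ℝ) ^ m := by gcongr
          _ = (4/3 : ℝ) ^ m * (3/4 : ℝ) ^ n := by ring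
      exact mul_le_mul_of_nonneg_left key hKKpos.le
    have hmaj : Summable (fun n : ℕ => KKk * ((4/3 : ℝ) ^ m * (3/4 : ℝ) ^ n)) :=
      (((summable_geometric_of_lt_one (by norm_num) (by norm_num)).mul_left
        ((4/3 : ℝ) ^ m)).mul_left KKk)
    have hBsum : Summable (fun n : ℕ => w (-(n + 1))) :=
      Summable.of_nonneg_of_le (fun n => by simp only [hw]; positivity) hqb hmaj
    have ht2 : (∑' n : ℕ, w (-(n + 1))) ≤ KKk * ((4/3 : ℝ) ^ m * (1 - 3/4 : ℝ)⁻¹) := by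
      have hmt : (∑' n : ℕ, KKk * ((4/3 : ℝ) ^ m * (3/4 : ℝ) ^ n)) =
          KKk * ((4/3 : ℝ) ^ m * (1 - 3/4 : ℝ)⁻¹) := by
        rw [tsum_mul_left, tsum_mul_left, tsum_geometric_of_lt_one (by norm_num) (by norm_num)]
      exact le_trans (Summable.tsum_le_tsum hqb hBsum hmaj) (le_of_eq hmt)
    have hS : HasSum w (KKk * (1 - 3/4 : ℝ)⁻¹ + ∑' n : ℕ, w (-(n + 1))) :=
      HasSum.of_nat_of_neg_add_one hA hBsum.hasSum
    refine ⟨_, hS, ?_⟩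
    have h43 : (1 : ℝ) ≤ (4/3 : ℝ) ^ m := one_le_pow₀ (by norm_num)
    have hstep : KKk * (1 - 3/4 : ℝ)⁻¹ + (∑' n : ℕ, w (-(n + 1))) ≤ 8 * KKk * (4/3 : ℝ) ^ m := by
      have hinv : ((1 : ℝ) - 3/4)⁻¹ = 4 := by norm_num
      rw [hinv]
      nlinarith [ht2, hKKpos]
    refine le_trans hstep (le_of_eq ?_)
    rw [hKKk]
    rw [show ((4:ℝ) * ε) ^ m = 4 ^ m * ε ^ m from mul_pow _ _ _,
      show ((4:ℝ)/3) ^ m = 4 ^ m / 3 ^ m from div_pow _ _ _]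
    field_simp
  -- assemble
  refine ⟨fun k t => ∑' i : ℤ, f i t * g (k - i) t, ?_, ?_⟩
  · intro k hk
    obtain ⟨S, hS, -⟩ := main k hk
    exact tendstoUniformlyOn_tsum hS.summable (fun i t ht => bound k hk i t ht)
  · refine ⟨8 * (M * C + C ^ 2), by positivity, 4 * ε, by positivity, ?_⟩
    intro k hk t ht
    obtain ⟨S, hS, hSle⟩ := main k hk
    have h1 : ‖∑' i : ℤ, f i t * g (k - i) t‖ ≤ S :=
      tsum_of_norm_bounded hS (fun i => bound k hk i t ht)
    have h2 : ((4 : ℝ) * ε) ^ (-k) = (4 * ε) ^ ((-k).toNat) := by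
      conv_lhs => rw [show -k = (((-k).toNat : ℕ) : ℤ) by omega]
      rw [zpow_natCast]
    calc ‖∑' i : ℤ, f i t * g (k - i) t‖ ≤ S := h1
      _ ≤ 8 * (M * C + C ^ 2) * (4 * ε) ^ (-k).toNat * (((-k).toNat !) : ℝ) := hSle
      _ = 8 * (M * C + C ^ 2) * (4 * ε) ^ (-k) * (((-k).toNat !) : ℝ) := by rw [h2]
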